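/- Let (F, ζ) : T → T' be a morphism of monads (T on C, T' on D) such that ζ : T'F ⇒ FT is a natural isomorphism, and suppose F has a right adjoint R with unit e : Id ⇒ RF and counit h : FR ⇒ Id. Define ξ : T ∘ R ⇒ R ∘ T' by ξ_Y = RT'(h_Y) ∘ R(ζ_{R(Y)}⁻¹) ∘ e_{TR(Y)}. Then: (a) (R, ξ) is a morphism of monads from T' to T, i.e. ξ_Y ∘ μ_{R(Y)} = R(μ'_Y) ∘ ξ_{T'(Y)} ∘ T(ξ_Y) and ξ_Y ∘ η_{R(Y)} = R(η'_Y); (b) the lifted functor R̃ : T'-Mod → T-Mod, (W, u) ↦ (R(W), R(u) ∘ ξ_W), is right adjoint to the lifted functor F̃_ζ : T-Mod → T'-Mod, (V, r) ↦ (F(V), F(r) ∘ ζ_V), with unit and counit given on underlying objects by e and h. -/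

import Mathlib

open CategoryTheory

namespace Stmt6Aux

variable {C D : Type*} [Category C] [Category D]
  (T : Monad C) (T' : Monad D) (F : C ⥤ D)
  (ζ : F ⋙ (T' : D ⥤ D) ≅ (T : C ⥤ C) ⋙ F)
  (R : D ⥤ C) (adjFR : F ⊣ R)

/-- The canonical `ξ`. -/
def xi (Y : D) : (T : C ⥤ C).obj (R.obj Y) ⟶ R.obj ((T' : D ⥤ D).obj Y) :=
  adjFR.unit.app ((T : C ⥤ C).obj (R.obj Y))
    ≫ R.map (ζ.inv.app (R.obj Y))
    ≫ R.map ((T' : D ⥤ D).map (adjFR.counit.app Y))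

lemma xi_adjunct (Y : D) :
    F.map (xi T T' F ζ R adjFR Y) ≫ adjFR.counit.app ((T' : D ⥤ D).obj Y)
      = ζ.inv.app (R.obj Y) ≫ (T' : D ⥤ D).map (adjFR.counit.app Y) := by
  simp [xi]

lemma xi_natural {Y Y' : D} (g : Y ⟶ Y') :
    (T : C ⥤ C).map (R.map g) ≫ xi T T' F ζ R adjFR Y'
      = xi T T' F ζ R adjFR Y ≫ R.map ((T' : D ⥤ D).map g) := by
  apply (adjFR.homEquiv _ _).symm.injective
  simp only [Adjunction.homEquiv_counit, F.map_comp, Category.assoc,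
    adjFR.counit_naturality, xi_adjunct]
  rw [reassoc_of% (xi_adjunct T T' F ζ R adjFR Y)]
  have := ζ.inv.naturality (R.map g)
  simp only [Functor.comp_map] at this
  rw [reassoc_of% this]
  simp only [Category.assoc, ← Functor.map_comp, adjFR.counit_naturality]
  exact congrArg (fun x => ζ.inv.app (R.obj Y) ≫ (T' : D ⥤ D).map x) (adjFR.counit.naturality g)

lemma xi_eta (hζη : ∀ X : C, T'.η.app (F.obj X) ≫ ζ.hom.app X = F.map (T.η.app X)) (Y : D) :
    T.η.app (R.obj Y) ≫ xi T T' F ζ R adjFR Y = R.map (T'.η.app Y) := by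
  apply (adjFR.homEquiv _ _).symm.injective
  simp only [Adjunction.homEquiv_counit, F.map_comp, Category.assoc, adjFR.counit_naturality]
  rw [xi_adjunct T T' F ζ R adjFR Y]
  have h1 : F.map (T.η.app (R.obj Y)) ≫ ζ.inv.app (R.obj Y) = T'.η.app (F.obj (R.obj Y)) := by
    rw [← hζη]; simp
  rw [reassoc_of% h1]
  have := T'.η.naturality (adjFR.counit.app Y)
  simp only [Functor.id_map] at this
  exact this.symm

lemma zeta_mu_inv
    (hζμ : ∀ X : C, T'.μ.app (F.obj X) ≫ ζ.hom.app X
      = (T' : D ⥤ D).map (ζ.hom.app X) ≫ ζ.hom.app ((T : C ⥤ C).obj X) ≫ F.map (T.μ.app X))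
    (X : C) :
    F.map (T.μ.app X) ≫ ζ.inv.app X
      = ζ.inv.app ((T : C ⥤ C).obj X) ≫ (T' : D ⥤ D).map (ζ.inv.app X)
          ≫ T'.μ.app (F.obj X) := by
  rw [← cancel_mono (ζ.hom.app X)]
  simp [hζμ X, ← Functor.map_comp_assoc]

lemma xi_mu
    (hζμ : ∀ X : C, T'.μ.app (F.obj X) ≫ ζ.hom.app X
      = (T' : D ⥤ D).map (ζ.hom.app X) ≫ ζ.hom.app ((T : C ⥤ C).obj X) ≫ F.map (T.μ.app X))
    (Y : D) :
    T.μ.app (R.obj Y) ≫ xi T T' F ζ R adjFR Y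
      = (T : C ⥤ C).map (xi T T' F ζ R adjFR Y) ≫ xi T T' F ζ R adjFR ((T' : D ⥤ D).obj Y)
          ≫ R.map (T'.μ.app Y) := by
  apply (adjFR.homEquiv _ _).symm.injective
  simp only [Adjunction.homEquiv_counit, F.map_comp, Category.assoc, adjFR.counit_naturality]
  rw [xi_adjunct T T' F ζ R adjFR Y,
    reassoc_of% (xi_adjunct T T' F ζ R adjFR ((T' : D ⥤ D).obj Y)),
    reassoc_of% (zeta_mu_inv T T' F ζ hζμ (R.obj Y))]
  have n1 := ζ.inv.naturality (xi T T' F ζ R adjFR Y)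
  simp only [Functor.comp_map] at n1
  rw [reassoc_of% n1, ← Functor.map_comp_assoc, xi_adjunct T T' F ζ R adjFR Y,
    Functor.map_comp_assoc]
  have n2 := T'.μ.naturality (adjFR.counit.app Y)
  simp only [Functor.comp_map, Functor.comp_obj, Functor.id_obj] at n2
  rw [n2]

lemma xi_unit_comp (V : C) :
    (T : C ⥤ C).map (adjFR.unit.app V) ≫ xi T T' F ζ R adjFR (F.obj V) ≫ R.map (ζ.hom.app V)
      = adjFR.unit.app ((T : C ⥤ C).obj V) := by
  apply (adjFR.homEquiv _ _).symm.injective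
  simp only [Adjunction.homEquiv_counit, F.map_comp, Category.assoc, adjFR.counit_naturality,
    adjFR.left_triangle_components]
  rw [reassoc_of% (xi_adjunct T T' F ζ R adjFR (F.obj V))]
  have n1 := ζ.inv.naturality (adjFR.unit.app V)
  simp only [Functor.comp_map] at n1
  rw [reassoc_of% n1, ← Functor.map_comp_assoc, adjFR.left_triangle_components]
  simp

variable (hζμ : ∀ X : C, T'.μ.app (F.obj X) ≫ ζ.hom.app X
      = (T' : D ⥤ D).map (ζ.hom.app X) ≫ ζ.hom.app ((T : C ⥤ C).obj X) ≫ F.map (T.μ.app X))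
  (hζη : ∀ X : C, T'.η.app (F.obj X) ≫ ζ.hom.app X = F.map (T.η.app X))

/-- The lifted left adjoint. -/
@[simps]
def Ftil : T.Algebra ⥤ T'.Algebra where
  obj M :=
    { A := F.obj M.A
      a := ζ.hom.app M.A ≫ F.map M.a
      unit := by rw [← Category.assoc, hζη, ← F.map_comp, M.unit]; simp
      assoc := by
        rw [reassoc_of% (hζμ M.A), ← Functor.map_comp, M.assoc, Functor.map_comp]
        have n := ζ.hom.naturality M.a
        simp only [Functor.comp_map] at n
        rw [← reassoc_of% n]
        simp }
  map {M N} f :=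
    { f := F.map f.f
      h := by
        have n := ζ.hom.naturality f.f
        simp only [Functor.comp_map] at n
        dsimp only
        rw [reassoc_of% n, ← Functor.map_comp, f.h, Functor.map_comp]
        simp }

/-- The lifted right adjoint. -/
@[simps]
def Rtil : T'.Algebra ⥤ T.Algebra where
  obj W :=
    { A := R.obj W.A
      a := xi T T' F ζ R adjFR W.A ≫ R.map W.a
      unit := by
        rw [← Category.assoc, xi_eta T T' F ζ R adjFR hζη, ← R.map_comp, W.unit]; simp
      assoc := by
        rw [reassoc_of% (xi_mu T T' F ζ R adjFR hζμ W.A), ← Functor.map_comp, W.assoc,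
          Functor.map_comp]
        have n := xi_natural T T' F ζ R adjFR W.a
        simp [Functor.map_comp, reassoc_of% n] }
  map {W W'} g :=
    { f := R.map g.f
      h := by
        dsimp only
        rw [← Category.assoc, xi_natural, Category.assoc, ← Functor.map_comp, g.h,
          Functor.map_comp, Category.assoc] }

/-- The lifted adjunction. -/
def adjT : Ftil T T' F ζ hζμ hζη ⊣ Rtil T T' F ζ R adjFR hζμ hζη where
  unit :=
    { app := fun M =>
        { f := adjFR.unit.app M.A
          h := by
            dsimp only [Ftil, Rtil, Functor.comp_obj, Functor.id_obj]
            rw [R.map_comp, reassoc_of% (xi_unit_comp T T' F ζ R adjFR M.A)]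
            simpa using (adjFR.unit.naturality M.a).symm }
      naturality := by
        intro M N f
        ext
        exact adjFR.unit.naturality f.f }
  counit :=
    { app := fun W =>
        { f := adjFR.counit.app W.A
          h := by
            dsimp only [Ftil, Rtil, Functor.comp_obj, Functor.id_obj]
            simp only [Functor.map_comp, Category.assoc, adjFR.counit_naturality]
            rw [reassoc_of% (xi_adjunct T T' F ζ R adjFR W.A)]
            simp }
      naturality := by
        intro W W' g
        ext
        exact adjFR.counit.naturality g.f }
  left_triangle_components := by
    intro M
    ext
    exact adjFR.left_triangle_components M.A
  right_triangle_components := by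
    intro W
    ext
    exact adjFR.right_triangle_components W.A

end Stmt6Aux
theorem stmt_6 {C D : Type*} [Category C] [Category D]
    (T : Monad C) (T' : Monad D) (F : C ⥤ D)
    (ζ : F ⋙ (T' : D ⥤ D) ≅ (T : C ⥤ C) ⋙ F)
    (hζμ : ∀ X : C, T'.μ.app (F.obj X) ≫ ζ.hom.app X
      = (T' : D ⥤ D).map (ζ.hom.app X) ≫ ζ.hom.app ((T : C ⥤ C).obj X) ≫ F.map (T.μ.app X))
    (hζη : ∀ X : C, T'.η.app (F.obj X) ≫ ζ.hom.app X = F.map (T.η.app X))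
    (R : D ⥤ C) (adjFR : F ⊣ R)
    (ξ : ∀ Y : D, (T : C ⥤ C).obj (R.obj Y) ⟶ R.obj ((T' : D ⥤ D).obj Y))
    (hξ : ∀ Y : D, ξ Y
      = adjFR.unit.app ((T : C ⥤ C).obj (R.obj Y))
        ≫ R.map (ζ.inv.app (R.obj Y))
        ≫ R.map ((T' : D ⥤ D).map (adjFR.counit.app Y))) :
    (∀ Y : D, T.μ.app (R.obj Y) ≫ ξ Y
        = (T : C ⥤ C).map (ξ Y) ≫ ξ ((T' : D ⥤ D).obj Y) ≫ R.map (T'.μ.app Y))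
    ∧ (∀ Y : D, T.η.app (R.obj Y) ≫ ξ Y = R.map (T'.η.app Y))
    ∧ ∃ (Ft : T.Algebra ⥤ T'.Algebra) (Rt : T'.Algebra ⥤ T.Algebra),
        (∀ M : T.Algebra, (Ft.obj M).A = F.obj M.A
          ∧ HEq (Ft.obj M).a (ζ.hom.app M.A ≫ F.map M.a))
        ∧ (∀ (M N : T.Algebra) (f : M ⟶ N), HEq (Ft.map f).f (F.map f.f))
        ∧ (∀ W : T'.Algebra, (Rt.obj W).A = R.obj W.A
            ∧ HEq (Rt.obj W).a (ξ W.A ≫ R.map W.a))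
        ∧ (∀ (W W' : T'.Algebra) (g : W ⟶ W'), HEq (Rt.map g).f (R.map g.f))
        ∧ ∃ adj2 : Ft ⊣ Rt,
            (∀ M : T.Algebra, HEq (adj2.unit.app M).f (adjFR.unit.app M.A))
            ∧ (∀ W : T'.Algebra, HEq (adj2.counit.app W).f (adjFR.counit.app W.A)) := by
  have hx : ξ = Stmt6Aux.xi T T' F ζ R adjFR := funext hξ
  subst hx
  exact ⟨Stmt6Aux.xi_mu T T' F ζ R adjFR hζμ, Stmt6Aux.xi_eta T T' F ζ R adjFR hζη,
    Stmt6Aux.Ftil T T' F ζ hζμ hζη, Stmt6Aux.Rtil T T' F ζ R adjFR hζμ hζη,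
    fun M => ⟨rfl, HEq.rfl⟩, fun M N f => HEq.rfl, fun W => ⟨rfl, HEq.rfl⟩,
    fun W W' g => HEq.rfl, Stmt6Aux.adjT T T' F ζ R adjFR hζμ hζη,
    fun M => HEq.rfl, fun W => HEq.rfl⟩
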